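/- arXiv:2207.12465 — 2 statements merged into one kernel-verified Lean document; each statement's English description precedes it below -/
import Mathlib

section
/- Let G be a 2-connected graph on n vertices with no cycle of length greater than ℓ, where k = ⌊ℓ/2⌋ ≥ 3 and n ≥ 3k. If v is a vertex of G of degree at most k-1, then the number of 5-cycles of G containing v is at most k(k-2)²·n - (1/2)·k²(k-2)². -/
def TwoConnected {V : Type*} [Fintype V] (G : SimpleGraph V) : Prop :=
  3 ≤ Fintype.card V ∧ G.Connected ∧
    ∀ v : V, ((⊤ : G.Subgraph).deleteVerts {v}).coe.Connected

def CircumAtMost {V : Type*} (G : SimpleGraph V) (ℓ : ℕ) : Prop :=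
  ∀ ⦃v : V⦄ (c : G.Walk v v), c.IsCycle → c.length ≤ ℓ

/-- The number of (unlabeled) `m`-cycle subgraphs of `G` passing through the vertex `v`:
each corresponds to exactly `2m` embeddings of `C_m` hitting `v`. -/
noncomputable def cycleCountThrough {V : Type*} (G : SimpleGraph V) (m : ℕ) (v : V) : ℕ :=
  Nat.card {f : SimpleGraph.cycleGraph m ↪g G // ∃ i, f i = v} / (2 * m)

namespace C5Aux
open Finset SimpleGraph

set_option linter.unusedSectionVars false
set_option linter.unusedVariables false

section general
variable {V : Type*}

/-- `getVert` is injective on (indices up to the length of) a path. -/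
lemma path_getVert_inj {G : SimpleGraph V} {u w : V} (p : G.Walk u w) :
    p.IsPath → ∀ i j : ℕ, i ≤ p.length → j ≤ p.length →
      p.getVert i = p.getVert j → i = j := by
  induction p with
  | nil => intro _ i j hi hj _; simp at hi hj; omega
  | @cons u v w h q ih =>
    intro hp i j hi hj hij
    rw [SimpleGraph.Walk.cons_isPath_iff] at hp
    match i, j with
    | 0, 0 => rfl
    | 0, (j+1) =>
      exfalso
      apply hp.2
      rw [SimpleGraph.Walk.mem_support_iff_exists_getVert]
      refine ⟨j, ?_, ?_⟩
      · have : (SimpleGraph.Walk.cons h q).getVert (j+1) = q.getVert j :=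
          SimpleGraph.Walk.getVert_cons_succ q h
        rw [← this, ← hij, SimpleGraph.Walk.getVert_zero]
      · simpa [SimpleGraph.Walk.length_cons] using hj
    | (i+1), 0 =>
      exfalso
      apply hp.2
      rw [SimpleGraph.Walk.mem_support_iff_exists_getVert]
      refine ⟨i, ?_, ?_⟩
      · have : (SimpleGraph.Walk.cons h q).getVert (i+1) = q.getVert i :=
          SimpleGraph.Walk.getVert_cons_succ q h
        rw [← this, hij, SimpleGraph.Walk.getVert_zero]
      · simpa [SimpleGraph.Walk.length_cons] using hi
    | (i+1), (j+1) =>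
      have e1 : (SimpleGraph.Walk.cons h q).getVert (i+1) = q.getVert i :=
        SimpleGraph.Walk.getVert_cons_succ q h
      have e2 : (SimpleGraph.Walk.cons h q).getVert (j+1) = q.getVert j :=
        SimpleGraph.Walk.getVert_cons_succ q h
      have := ih hp.1 i j (by simpa [SimpleGraph.Walk.length_cons] using hi)
        (by simpa [SimpleGraph.Walk.length_cons] using hj)
        (by rw [← e1, ← e2, hij])
      omega

/-- In a path, an edge containing the initial vertex must be the first edge. -/
lemma path_start_edge {G : SimpleGraph V} {u w z : V} (p : G.Walk u w) :
    p.IsPath → s(z, u) ∈ p.edges → z = p.getVert 1 := by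
  induction p with
  | nil => intro _ he; simp at he
  | @cons u v w h q ih =>
    intro hp he
    rw [SimpleGraph.Walk.cons_isPath_iff] at hp
    rw [SimpleGraph.Walk.edges_cons, List.mem_cons] at he
    rcases he with he | he
    · rw [Sym2.eq_iff] at he
      have e1 : (SimpleGraph.Walk.cons h q).getVert 1 = q.getVert 0 :=
        SimpleGraph.Walk.getVert_cons_succ q h
      rw [e1, SimpleGraph.Walk.getVert_zero]
      rcases he with ⟨hz, hu⟩ | ⟨hz, _⟩
      · exact absurd (hu ▸ h) (G.irrefl)
      · exact hz
    · exfalso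
      exact hp.2 (q.snd_mem_support_of_mem_edges he)



end general

section fin5

lemma c5_key (i d : Fin 5) : (SimpleGraph.cycleGraph 5).Adj i (i + d) ↔ (-d = 1 ∨ d = 1) := by
  have h : (SimpleGraph.cycleGraph 5).Adj i (i + d) ↔ (i - (i + d) = 1 ∨ (i + d) - i = 1) :=
    SimpleGraph.cycleGraph_adj (n := 3)
  rw [h, sub_add_cancel_left, add_sub_cancel_left]

lemma fin5_shift (i : Fin 5) (d e : Fin 5) : i + d + e = i + (d + e) := by
  rw [add_assoc]

lemma fin5_add_ne (i : Fin 5) {d e : Fin 5} (h : d ≠ e) : i + d ≠ i + e :=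
  fun hh => h (add_left_cancel hh)

lemma c5_facts (i : Fin 5) :
    (cycleGraph 5).Adj i (i+1) ∧ (cycleGraph 5).Adj i (i+4) ∧
    (cycleGraph 5).Adj (i+1) (i+2) ∧ (cycleGraph 5).Adj (i+2) (i+3) ∧
    (cycleGraph 5).Adj (i+3) (i+4) ∧
    ¬(cycleGraph 5).Adj i (i+2) ∧ ¬(cycleGraph 5).Adj i (i+3) ∧
    ¬(cycleGraph 5).Adj (i+1) (i+3) ∧ ¬(cycleGraph 5).Adj (i+4) (i+2) := by
  have e12 : i + 2 = (i + 1) + 1 := by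
    rw [fin5_shift]; exact congrArg (fun z => i + z) (by decide)
  have e23 : i + 3 = (i + 2) + 1 := by
    rw [fin5_shift]; exact congrArg (fun z => i + z) (by decide)
  have e34 : i + 4 = (i + 3) + 1 := by
    rw [fin5_shift]; exact congrArg (fun z => i + z) (by decide)
  have e13 : i + 3 = (i + 1) + 2 := by
    rw [fin5_shift]; exact congrArg (fun z => i + z) (by decide)
  have e42 : i + 2 = (i + 4) + 3 := by
    rw [fin5_shift]; exact congrArg (fun z => i + z) (by decide)
  refine ⟨(c5_key i 1).mpr (by decide), (c5_key i 4).mpr (by decide), ?_, ?_, ?_, ?_, ?_, ?_, ?_⟩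
  · rw [e12]; exact (c5_key (i+1) 1).mpr (by decide)
  · rw [e23]; exact (c5_key (i+2) 1).mpr (by decide)
  · rw [e34]; exact (c5_key (i+3) 1).mpr (by decide)
  · intro h; have := (c5_key i 2).mp h; revert this; decide
  · intro h; have := (c5_key i 3).mp h; revert this; decide
  · rw [e13]; intro h; have := (c5_key (i+1) 2).mp h; revert this; decide
  · rw [e42]; intro h; have := (c5_key (i+4) 3).mp h; revert this; decide


end fin5

section finv
variable {V : Type*} [Fintype V] [DecidableEq V]

/-- Core of the long-cycle argument: a maximal path starting in class `A` of a
"bipartite-like" graph with min degree `δ` at endpoints of edges yields a long cycle. -/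
lemma long_cycle_core [Fintype V] [DecidableEq V]
    (H : SimpleGraph V) [DecidableRel H.Adj] (A B : Finset V)
    (hdisj : ∀ x : V, ¬(x ∈ A ∧ x ∈ B))
    (hbip : ∀ x y : V, H.Adj x y → (x ∈ A ∧ y ∈ B) ∨ (x ∈ B ∧ y ∈ A))
    (δ : ℕ) (hδ : 2 ≤ δ)
    {u w : V} (p : H.Walk u w) (hp : p.IsPath) (hlen : 1 ≤ p.length)
    (hmax : ∀ z : V, H.Adj u z → z ∈ p.support)
    (hu : u ∈ A) (hdegu : δ ≤ H.degree u) :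
    ∃ (z : V) (c : H.Walk z z), c.IsCycle ∧ 2 * δ ≤ c.length := by
  classical
  -- parity of positions
  have par : ∀ i : ℕ, i ≤ p.length →
      (i % 2 = 0 → p.getVert i ∈ A) ∧ (i % 2 = 1 → p.getVert i ∈ B) := by
    intro i
    induction i with
    | zero =>
      intro _
      constructor
      · intro _; simpa [SimpleGraph.Walk.getVert_zero] using hu
      · omega
    | succ i ih =>
      intro hi
      have hii := ih (by omega)
      have hadj : H.Adj (p.getVert i) (p.getVert (i+1)) :=
        p.adj_getVert_succ (by omega)
      constructor
      · intro hpar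
        have hiB : p.getVert i ∈ B := (hii.2) (by omega)
        rcases hbip _ _ hadj with ⟨hA, _⟩ | ⟨_, hA⟩
        · exact absurd ⟨hA, hiB⟩ (hdisj _)
        · exact hA
      · intro hpar
        have hiA : p.getVert i ∈ A := (hii.1) (by omega)
        rcases hbip _ _ hadj with ⟨_, hB⟩ | ⟨hB, _⟩
        · exact hB
        · exact absurd ⟨hiA, hB⟩ (hdisj _)
  -- indices of neighbors of u
  set I : Finset ℕ :=
    (Finset.range (p.length + 1)).filter (fun i => H.Adj u (p.getVert i)) with hI
  have hNuI : δ ≤ I.card := by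
    refine le_trans hdegu ?_
    refine Finset.card_le_card_of_surjOn (fun i => p.getVert i) ?_
    intro z hz
    have hzadj : H.Adj u z := by
      simp only [Finset.mem_coe, SimpleGraph.mem_neighborFinset] at hz
      exact hz
    have hzsup : z ∈ p.support := hmax z hzadj
    rw [SimpleGraph.Walk.mem_support_iff_exists_getVert] at hzsup
    obtain ⟨n, hn1, hn2⟩ := hzsup
    refine ⟨n, ?_, hn1⟩
    simp only [hI, Finset.coe_filter, Set.mem_setOf_eq, Finset.mem_range]
    exact ⟨by omega, by rw [hn1]; exact hzadj⟩
  have hodd : ∀ i ∈ I, i % 2 = 1 := by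
    intro i hi
    rw [hI, Finset.mem_filter, Finset.mem_range] at hi
    by_contra hcon
    have hie : i % 2 = 0 := by omega
    have hiA : p.getVert i ∈ A := (par i (by omega)).1 hie
    rcases hbip _ _ hi.2 with ⟨_, hB⟩ | ⟨hB, _⟩
    · exact hdisj _ ⟨hiA, hB⟩
    · exact hdisj _ ⟨hu, hB⟩
  have hIne : I.Nonempty := Finset.card_pos.mp (by omega)
  set j := I.max' hIne with hj
  have hjI : j ∈ I := I.max'_mem hIne
  have hjle : ∀ i ∈ I, i ≤ j := fun i hi => I.le_max' i hi
  have hjodd : j % 2 = 1 := hodd j hjI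
  have hjlen : j ≤ p.length := by
    have := hjI; rw [hI, Finset.mem_filter, Finset.mem_range] at this; omega
  -- counting: I.card ≤ j/2 + 1
  have hcount : I.card ≤ j / 2 + 1 := by
    have : I.card ≤ (Finset.range (j / 2 + 1)).card := by
      refine Finset.card_le_card_of_injOn (fun i => i / 2) ?_ ?_
      · intro i hi
        have h1 : i ≤ j := hjle i hi
        rw [Finset.mem_coe, Finset.mem_range]
        show i / 2 < j / 2 + 1
        omega
      · intro i hi i' hi' hii
        simp only [Finset.mem_coe] at hi hi'
        have h1 := hodd i hi
        have h2 := hodd i' hi'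
        have hii' : i / 2 = i' / 2 := hii
        omega
    simpa using this
  have hjbig : 2 * δ - 1 ≤ j := by omega
  -- the far neighbor
  set z : V := p.getVert j with hzdef
  have hzadj : H.Adj u z := by
    have := hjI; rw [hI, Finset.mem_filter] at this; exact this.2
  have hzsup : z ∈ p.support := by
    rw [SimpleGraph.Walk.mem_support_iff_exists_getVert]
    exact ⟨j, rfl, hjlen⟩
  set q := p.takeUntil z hzsup with hq
  have hqpath : q.IsPath := hp.takeUntil hzsup
  have hqlen_le : q.length ≤ p.length := SimpleGraph.Walk.length_takeUntil_le p hzsup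
  -- q.length = j
  have hpq : p.getVert q.length = z := by
    conv_lhs => rw [← p.take_spec hzsup]
    rw [SimpleGraph.Walk.getVert_append]
    rw [← hq]
    simp [SimpleGraph.Walk.getVert_zero]
  have hqlen : q.length = j :=
    path_getVert_inj p hp q.length j hqlen_le hjlen (by rw [hpq])
  -- prefix getVert agreement at 1
  have hgv1 : q.getVert 1 = p.getVert 1 := by
    conv_rhs => rw [← p.take_spec hzsup]
    rw [SimpleGraph.Walk.getVert_append]
    have : (1:ℕ) < q.length := by omega
    rw [← hq]
    simp [this]
  -- the closing edge is not in q
  have hne : s(z, u) ∉ q.edges := by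
    intro hmem
    have h1 : z = q.getVert 1 := path_start_edge q hqpath hmem
    have h2 : p.getVert j = p.getVert 1 := by
      rw [← hzdef, ← hgv1, ← h1]
    have := path_getVert_inj p hp j 1 hjlen (by omega) h2
    omega
  -- build the cycle
  have hcyc : (SimpleGraph.Walk.cons hzadj.symm q).IsCycle :=
    SimpleGraph.Path.cons_isCycle ⟨q, hqpath⟩ hzadj.symm hne
  refine ⟨z, SimpleGraph.Walk.cons hzadj.symm q, hcyc, ?_⟩
  rw [SimpleGraph.Walk.length_cons]
  omega


/-- A graph whose every edge has both endpoints of degree at least `δ ≥ 2`, and which is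
bipartite-like between `A` and `B`, and has an edge, contains a cycle of length `≥ 2δ`. -/
lemma long_cycle_of_min_degree [Fintype V] [DecidableEq V]
    (H : SimpleGraph V) [DecidableRel H.Adj] (A B : Finset V)
    (hdisj : ∀ x : V, ¬(x ∈ A ∧ x ∈ B))
    (hbip : ∀ x y : V, H.Adj x y → (x ∈ A ∧ y ∈ B) ∨ (x ∈ B ∧ y ∈ A))
    (δ : ℕ) (hδ : 2 ≤ δ)
    (hdeg : ∀ x y : V, H.Adj x y → δ ≤ H.degree x)
    (hedge : ∃ x y : V, H.Adj x y) :
    ∃ (z : V) (c : H.Walk z z), c.IsCycle ∧ 2 * δ ≤ c.length := by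
  classical
  obtain ⟨x₀, y₀, hxy₀⟩ := hedge
  set n := Fintype.card V with hn
  set P : ℕ → Prop := fun m => ∃ (u w : V) (p : H.Walk u w), p.IsPath ∧ p.length = m with hP
  have hP1 : P 1 := by
    refine ⟨x₀, y₀, SimpleGraph.Walk.cons hxy₀ SimpleGraph.Walk.nil, ?_, by simp⟩
    rw [SimpleGraph.Walk.cons_isPath_iff]
    exact ⟨SimpleGraph.Walk.IsPath.nil, by simp [hxy₀.ne]⟩
  have h1n : 1 ≤ n := by
    rw [hn]
    exact Fintype.card_pos_iff.mpr ⟨x₀⟩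
  set M := Nat.findGreatest P n with hM
  have hPM : P M := Nat.findGreatest_spec h1n hP1
  have hM1 : 1 ≤ M := Nat.le_findGreatest h1n hP1
  obtain ⟨u, w, p, hp, hplen⟩ := hPM
  have hmax : ∀ z : V, H.Adj u z → z ∈ p.support := by
    intro z hz
    by_contra hzs
    have hcons : (SimpleGraph.Walk.cons hz.symm p).IsPath := by
      rw [SimpleGraph.Walk.cons_isPath_iff]
      exact ⟨hp, hzs⟩
    have hlt : M + 1 ≤ n := by
      have := hcons.length_lt
      rw [SimpleGraph.Walk.length_cons, hplen] at this
      omega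
    have hng : ¬ P (M + 1) :=
      Nat.findGreatest_is_greatest (P := P) (n := n) (k := M + 1) (by omega) hlt
    exact hng ⟨z, w, SimpleGraph.Walk.cons hz.symm p, hcons, by
      rw [SimpleGraph.Walk.length_cons, hplen]⟩
  have hadj0 : H.Adj u (p.getVert 1) := by
    have := p.adj_getVert_succ (i := 0) (by omega)
    rwa [SimpleGraph.Walk.getVert_zero] at this
  have hdegu : δ ≤ H.degree u := hdeg _ _ hadj0
  rcases hbip _ _ hadj0 with ⟨hA, _⟩ | ⟨hB, _⟩
  · exact long_cycle_core H A B hdisj hbip δ hδ p hp (by omega) hmax hA hdegu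
  · refine long_cycle_core H B A (fun x hx => hdisj x ⟨hx.2, hx.1⟩)
      (fun x y hxy => (hbip x y hxy).symm) δ hδ p hp (by omega) hmax hB hdegu

/-- The bipartite-like restriction of `G` between `A` and `B`. -/
def bipRestrict [DecidableEq V] (G : SimpleGraph V) (A B : Finset V) : SimpleGraph V where
  Adj x y := G.Adj x y ∧ ((x ∈ A ∧ y ∈ B) ∨ (x ∈ B ∧ y ∈ A))
  symm := by
    refine ⟨?_⟩
    intro x y h
    exact ⟨h.1.symm, h.2.elim (fun hh => Or.inr ⟨hh.2, hh.1⟩) (fun hh => Or.inl ⟨hh.2, hh.1⟩)⟩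
  loopless := ⟨fun x h => G.irrefl h.1⟩

instance bipRestrict_decRel [DecidableEq V] (G : SimpleGraph V) [DecidableRel G.Adj]
    (A B : Finset V) : DecidableRel (bipRestrict G A B).Adj :=
  fun x y => inferInstanceAs (Decidable (_ ∧ _))

variable [Fintype V] [DecidableEq V]

/-- Adjacent pairs of `(A ∩ W) × (B ∩ W)`. -/
def Fpairs (G : SimpleGraph V) [DecidableRel G.Adj] (A B W : Finset V) : Finset (V × V) :=
  ((A ∩ W) ×ˢ (B ∩ W)).filter fun q => G.Adj q.1 q.2

lemma Fpairs_erase_le (G : SimpleGraph V) [DecidableRel G.Adj] (A B W : Finset V)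
    (hAB : Disjoint A B) (z : V) (hz : z ∈ A) :
    (Fpairs G A B W).card ≤ (Fpairs G A B (W.erase z)).card
      + ((B ∩ W).filter (fun y => G.Adj z y)).card := by
  classical
  have hsub : Fpairs G A B W ⊆
      Fpairs G A B (W.erase z) ∪ (Fpairs G A B W).filter (fun q => q.1 = z) := by
    intro q hq
    rw [Finset.mem_union]
    by_cases h1 : q.1 = z
    · exact Or.inr (Finset.mem_filter.mpr ⟨hq, h1⟩)
    · left
      rw [Fpairs, Finset.mem_filter, Finset.mem_product] at hq ⊢
      obtain ⟨⟨hq1, hq2⟩, hadj⟩ := hq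
      have hq2z : q.2 ≠ z := by
        intro hc
        exact (Finset.disjoint_left.mp hAB hz) (hc ▸ (Finset.mem_inter.mp hq2).1)
      refine ⟨⟨?_, ?_⟩, hadj⟩
      · rw [Finset.mem_inter] at hq1 ⊢
        exact ⟨hq1.1, Finset.mem_erase.mpr ⟨h1, hq1.2⟩⟩
      · rw [Finset.mem_inter] at hq2 ⊢
        exact ⟨hq2.1, Finset.mem_erase.mpr ⟨hq2z, hq2.2⟩⟩
  calc (Fpairs G A B W).card
      ≤ (Fpairs G A B (W.erase z) ∪ (Fpairs G A B W).filter (fun q => q.1 = z)).card :=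
        Finset.card_le_card hsub
    _ ≤ (Fpairs G A B (W.erase z)).card + ((Fpairs G A B W).filter (fun q => q.1 = z)).card :=
        Finset.card_union_le _ _
    _ ≤ (Fpairs G A B (W.erase z)).card + ((B ∩ W).filter (fun y => G.Adj z y)).card := by
        gcongr
        refine Finset.card_le_card_of_injOn Prod.snd ?_ ?_
        · intro q hq
          rw [Finset.mem_coe, Finset.mem_filter] at hq
          obtain ⟨hq, hq1⟩ := hq
          rw [Fpairs, Finset.mem_filter, Finset.mem_product] at hq
          rw [Finset.mem_coe, Finset.mem_filter]
          exact ⟨hq.1.2, hq1 ▸ hq.2⟩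
        · intro q hq q' hq' hqq
          simp only [Finset.coe_filter, Set.mem_setOf_eq] at hq hq'
          exact Prod.ext (hq.2.trans hq'.2.symm) hqq

lemma Fpairs_erase_le' (G : SimpleGraph V) [DecidableRel G.Adj] (A B W : Finset V)
    (hAB : Disjoint A B) (z : V) (hz : z ∈ B) :
    (Fpairs G A B W).card ≤ (Fpairs G A B (W.erase z)).card
      + ((A ∩ W).filter (fun x => G.Adj x z)).card := by
  classical
  have hsub : Fpairs G A B W ⊆
      Fpairs G A B (W.erase z) ∪ (Fpairs G A B W).filter (fun q => q.2 = z) := by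
    intro q hq
    rw [Finset.mem_union]
    by_cases h1 : q.2 = z
    · exact Or.inr (Finset.mem_filter.mpr ⟨hq, h1⟩)
    · left
      rw [Fpairs, Finset.mem_filter, Finset.mem_product] at hq ⊢
      obtain ⟨⟨hq1, hq2⟩, hadj⟩ := hq
      have hq1z : q.1 ≠ z := by
        intro hc
        exact (Finset.disjoint_right.mp hAB hz) (hc ▸ (Finset.mem_inter.mp hq1).1)
      refine ⟨⟨?_, ?_⟩, hadj⟩
      · rw [Finset.mem_inter] at hq1 ⊢
        exact ⟨hq1.1, Finset.mem_erase.mpr ⟨hq1z, hq1.2⟩⟩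
      · rw [Finset.mem_inter] at hq2 ⊢
        exact ⟨hq2.1, Finset.mem_erase.mpr ⟨h1, hq2.2⟩⟩
  calc (Fpairs G A B W).card
      ≤ (Fpairs G A B (W.erase z) ∪ (Fpairs G A B W).filter (fun q => q.2 = z)).card :=
        Finset.card_le_card hsub
    _ ≤ (Fpairs G A B (W.erase z)).card + ((Fpairs G A B W).filter (fun q => q.2 = z)).card :=
        Finset.card_union_le _ _
    _ ≤ (Fpairs G A B (W.erase z)).card + ((A ∩ W).filter (fun x => G.Adj x z)).card := by
        gcongr
        refine Finset.card_le_card_of_injOn Prod.fst ?_ ?_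
        · intro q hq
          rw [Finset.mem_coe, Finset.mem_filter] at hq
          obtain ⟨hq, hq1⟩ := hq
          rw [Fpairs, Finset.mem_filter, Finset.mem_product] at hq
          rw [Finset.mem_coe, Finset.mem_filter]
          exact ⟨hq.1.1, hq1 ▸ hq.2⟩
        · intro q hq q' hq' hqq
          simp only [Finset.coe_filter, Set.mem_setOf_eq] at hq hq'
          exact Prod.ext hqq (hq.2.trans hq'.2.symm)

/-- Extraction of a sub-vertex-set of minimum "cross-degree" at least `k+1`. -/
lemma extract (G : SimpleGraph V) [DecidableRel G.Adj] (A B : Finset V)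
    (hAB : Disjoint A B) (k : ℕ) :
    ∀ W : Finset V, k * W.card < (Fpairs G A B W).card →
      ∃ W', W' ⊆ W ∧ k * W'.card < (Fpairs G A B W').card ∧
        (∀ z ∈ A ∩ W', k + 1 ≤ ((B ∩ W').filter (fun y => G.Adj z y)).card) ∧
        (∀ z ∈ B ∩ W', k + 1 ≤ ((A ∩ W').filter (fun x => G.Adj x z)).card) := by
  classical
  intro W
  induction W using Finset.strongInduction with
  | _ W ih =>
    intro hW
    by_cases hbadA : ∃ z ∈ A ∩ W, ((B ∩ W).filter (fun y => G.Adj z y)).card ≤ k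
    · obtain ⟨z, hzAW, hzcard⟩ := hbadA
      rw [Finset.mem_inter] at hzAW
      have hssub : W.erase z ⊂ W := Finset.erase_ssubset hzAW.2
      have hcard : W.card = (W.erase z).card + 1 := by
        rw [Finset.card_erase_of_mem hzAW.2]
        have : 1 ≤ W.card := Finset.card_pos.mpr ⟨z, hzAW.2⟩
        omega
      have hdrop := Fpairs_erase_le G A B W hAB z hzAW.1
      have hmul : k * W.card = k * (W.erase z).card + k := by rw [hcard]; ring
      have hinv : k * (W.erase z).card < (Fpairs G A B (W.erase z)).card := by omega
      obtain ⟨W', hsub, h1, h2, h3⟩ := ih (W.erase z) hssub hinv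
      exact ⟨W', hsub.trans (Finset.erase_subset _ _), h1, h2, h3⟩
    · by_cases hbadB : ∃ z ∈ B ∩ W, ((A ∩ W).filter (fun x => G.Adj x z)).card ≤ k
      · obtain ⟨z, hzBW, hzcard⟩ := hbadB
        rw [Finset.mem_inter] at hzBW
        have hssub : W.erase z ⊂ W := Finset.erase_ssubset hzBW.2
        have hcard : W.card = (W.erase z).card + 1 := by
          rw [Finset.card_erase_of_mem hzBW.2]
          have : 1 ≤ W.card := Finset.card_pos.mpr ⟨z, hzBW.2⟩
          omega
        have hdrop := Fpairs_erase_le' G A B W hAB z hzBW.1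
        have hmul : k * W.card = k * (W.erase z).card + k := by rw [hcard]; ring
        have hinv : k * (W.erase z).card < (Fpairs G A B (W.erase z)).card := by omega
        obtain ⟨W', hsub, h1, h2, h3⟩ := ih (W.erase z) hssub hinv
        exact ⟨W', hsub.trans (Finset.erase_subset _ _), h1, h2, h3⟩
      · push_neg at hbadA hbadB
        exact ⟨W, Finset.Subset.refl W, hW,
          fun z hz => hbadA z hz, fun z hz => hbadB z hz⟩


/-- Key lemma: at most `k·|A∪B|` adjacent pairs between disjoint `A,B` if all cycles
have length at most `2k+1`. -/
lemma bip_count (G : SimpleGraph V) [DecidableRel G.Adj] (k : ℕ) (hk : 1 ≤ k)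
    (hc : ∀ (z : V) (c : G.Walk z z), c.IsCycle → c.length ≤ 2 * k + 1)
    (A B : Finset V) (hAB : Disjoint A B) :
    ((A ×ˢ B).filter fun q => G.Adj q.1 q.2).card ≤ k * (A ∪ B).card := by
  classical
  by_contra hcon
  push_neg at hcon
  have hinit : k * (A ∪ B).card < (Fpairs G A B (A ∪ B)).card := by
    have e1 : A ∩ (A ∪ B) = A := Finset.inter_eq_left.mpr Finset.subset_union_left
    have e2 : B ∩ (A ∪ B) = B := Finset.inter_eq_left.mpr Finset.subset_union_right
    rw [Fpairs, e1, e2]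
    exact hcon
  obtain ⟨W, hWsub, hWinv, hA, hB⟩ := extract G A B hAB k (A ∪ B) hinit
  set H : SimpleGraph V := bipRestrict G (A ∩ W) (B ∩ W) with hH
  have hdisj : ∀ x : V, ¬(x ∈ A ∩ W ∧ x ∈ B ∩ W) := by
    intro x ⟨h1, h2⟩
    exact Finset.disjoint_left.mp hAB (Finset.mem_inter.mp h1).1 (Finset.mem_inter.mp h2).1
  have hbip : ∀ x y : V, H.Adj x y → (x ∈ A ∩ W ∧ y ∈ B ∩ W) ∨ (x ∈ B ∩ W ∧ y ∈ A ∩ W) :=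
    fun x y h => h.2
  have hdeg : ∀ x y : V, H.Adj x y → k + 1 ≤ H.degree x := by
    intro x y hxy
    rcases hxy.2 with ⟨hxA, _⟩ | ⟨hxB, _⟩
    · calc k + 1 ≤ ((B ∩ W).filter (fun y => G.Adj x y)).card := hA x hxA
        _ ≤ (H.neighborFinset x).card := by
            refine Finset.card_le_card ?_
            intro y' hy'
            rw [Finset.mem_filter] at hy'
            rw [SimpleGraph.mem_neighborFinset]
            exact ⟨hy'.2, Or.inl ⟨hxA, hy'.1⟩⟩
        _ = H.degree x := SimpleGraph.card_neighborFinset_eq_degree H x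
    · calc k + 1 ≤ ((A ∩ W).filter (fun x' => G.Adj x' x)).card := hB x hxB
        _ ≤ (H.neighborFinset x).card := by
            refine Finset.card_le_card ?_
            intro y' hy'
            rw [Finset.mem_filter] at hy'
            rw [SimpleGraph.mem_neighborFinset]
            exact ⟨hy'.2.symm, Or.inr ⟨hxB, hy'.1⟩⟩
        _ = H.degree x := SimpleGraph.card_neighborFinset_eq_degree H x
  have hedge : ∃ x y : V, H.Adj x y := by
    have hpos : 0 < (Fpairs G A B W).card := by omega
    obtain ⟨q, hq⟩ := Finset.card_pos.mp hpos
    rw [Fpairs, Finset.mem_filter, Finset.mem_product] at hq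
    exact ⟨q.1, q.2, hq.2, Or.inl ⟨hq.1.1, hq.1.2⟩⟩
  obtain ⟨z, c, hcyc, hclen⟩ :=
    long_cycle_of_min_degree H (A ∩ W) (B ∩ W) hdisj hbip (k + 1) (by omega) hdeg hedge
  have hle : H ≤ G := fun _ _ hadj => hadj.1
  have hcyc' : (c.mapLe hle).IsCycle := (SimpleGraph.Walk.mapLe_isCycle hle).mpr hcyc
  have hlen' := hc z (c.mapLe hle) hcyc'
  have : (c.mapLe hle).length = c.length := SimpleGraph.Walk.length_map _ _
  omega


def XYset (G : SimpleGraph V) [DecidableRel G.Adj] (v a b : V) : Finset (V × V) :=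
  Finset.univ.filter fun q =>
    G.Adj a q.1 ∧ G.Adj q.1 q.2 ∧ G.Adj q.2 b ∧ ¬G.Adj v q.1 ∧ ¬G.Adj v q.2 ∧
    ¬G.Adj a q.2 ∧ ¬G.Adj b q.1 ∧ q.1 ≠ v ∧ q.2 ≠ v

lemma XYset_card_le (G : SimpleGraph V) [DecidableRel G.Adj] (k n : ℕ) (hk : 1 ≤ k)
    (hn : Fintype.card V = n)
    (hc : ∀ (z : V) (c : G.Walk z z), c.IsCycle → c.length ≤ 2 * k + 1)
    (v a b : V) (ha : G.Adj v a) :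
    (XYset G v a b).card ≤ k * (n - 2) := by
  classical
  set A : Finset V :=
    Finset.univ.filter (fun x => G.Adj a x ∧ ¬G.Adj v x ∧ ¬G.Adj b x ∧ x ≠ v) with hA
  set B : Finset V :=
    Finset.univ.filter (fun y => G.Adj b y ∧ ¬G.Adj v y ∧ ¬G.Adj a y ∧ y ≠ v) with hB
  have hsub : XYset G v a b ⊆ (A ×ˢ B).filter fun q => G.Adj q.1 q.2 := by
    intro q hq
    rw [XYset, Finset.mem_filter] at hq
    obtain ⟨-, h1, h2, h3, h4, h5, h6, h7, h8, h9⟩ := hq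
    rw [Finset.mem_filter, Finset.mem_product, hA, hB, Finset.mem_filter, Finset.mem_filter]
    exact ⟨⟨⟨Finset.mem_univ _, h1, h4, h7, h8⟩, ⟨Finset.mem_univ _, h3.symm, h5, h6, h9⟩⟩, h2⟩
  have hdisj : Disjoint A B := by
    rw [Finset.disjoint_left]
    intro x hx hx'
    rw [hA, Finset.mem_filter] at hx
    rw [hB, Finset.mem_filter] at hx'
    exact hx'.2.2.2.1 hx.2.1
  have hUB : (A ∪ B).card ≤ n - 2 := by
    have hsub2 : A ∪ B ⊆ (Finset.univ.erase v).erase a := by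
      intro x hx
      rw [Finset.mem_union] at hx
      rw [Finset.mem_erase, Finset.mem_erase]
      rcases hx with hx | hx
      · rw [hA, Finset.mem_filter] at hx
        refine ⟨?_, hx.2.2.2.2, Finset.mem_univ _⟩
        intro hc'
        exact G.irrefl (hc' ▸ hx.2.1)
      · rw [hB, Finset.mem_filter] at hx
        refine ⟨?_, hx.2.2.2.2, Finset.mem_univ _⟩
        intro hc'
        exact hx.2.2.1 (hc' ▸ ha)
    have hcard : ((Finset.univ.erase v).erase a).card = n - 2 := by
      rw [Finset.card_erase_of_mem, Finset.card_erase_of_mem (Finset.mem_univ v)]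
      · rw [Finset.card_univ, hn]; omega
      · exact Finset.mem_erase.mpr ⟨ha.ne', Finset.mem_univ _⟩
    calc (A ∪ B).card ≤ ((Finset.univ.erase v).erase a).card := Finset.card_le_card hsub2
      _ = n - 2 := hcard
  calc (XYset G v a b).card ≤ ((A ×ˢ B).filter fun q => G.Adj q.1 q.2).card :=
        Finset.card_le_card hsub
    _ ≤ k * (A ∪ B).card := bip_count G k hk hc A B hdisj
    _ ≤ k * (n - 2) := Nat.mul_le_mul_left k hUB


/-- Membership of the data extracted from an embedding hitting `v`. -/
lemma mem_big (G : SimpleGraph V) [DecidableRel G.Adj] (v : V)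
    (f : SimpleGraph.cycleGraph 5 ↪g G) (i : Fin 5) (hi : f i = v) :
    (⟨f (i+1), ⟨f (i+4), (f (i+2), f (i+3))⟩⟩ : (_ : V) × (_ : V) × V × V) ∈
      (G.neighborFinset v).sigma
        (fun a => ((G.neighborFinset v).erase a).sigma (fun b => XYset G v a b)) := by
  obtain ⟨a1, a4, a12, a23, a34, n2, n3, n13, n42⟩ := c5_facts i
  rw [Finset.mem_sigma]
  constructor
  · rw [SimpleGraph.mem_neighborFinset, ← hi]
    exact f.map_adj_iff.mpr a1
  rw [Finset.mem_sigma]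
  constructor
  · rw [Finset.mem_erase, SimpleGraph.mem_neighborFinset, ← hi]
    exact ⟨f.injective.ne (fin5_add_ne i (by decide)), f.map_adj_iff.mpr a4⟩
  rw [XYset, Finset.mem_filter]
  refine ⟨Finset.mem_univ _, f.map_adj_iff.mpr a12, f.map_adj_iff.mpr a23, ?_, ?_, ?_, ?_, ?_, ?_, ?_⟩
  · -- Adj (f (i+3)) (f (i+4))
    exact f.map_adj_iff.mpr a34
  · rw [← hi]; exact fun h => n2 (f.map_adj_iff.mp h)
  · rw [← hi]; exact fun h => n3 (f.map_adj_iff.mp h)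
  · exact fun h => n13 (f.map_adj_iff.mp h)
  · exact fun h => n42 (f.map_adj_iff.mp h)
  · rw [← hi]
    refine f.injective.ne ?_
    have := fin5_add_ne i (show (2:Fin 5) ≠ 0 by decide)
    rwa [add_zero] at this
  · rw [← hi]
    refine f.injective.ne ?_
    have := fin5_add_ne i (show (3:Fin 5) ≠ 0 by decide)
    rwa [add_zero] at this

lemma emb_ext (G : SimpleGraph V) (f g : SimpleGraph.cycleGraph 5 ↪g G) (i : Fin 5)
    (h0 : f i = g i) (h1 : f (i+1) = g (i+1)) (h2 : f (i+2) = g (i+2))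
    (h3 : f (i+3) = g (i+3)) (h4 : f (i+4) = g (i+4)) : f = g := by
  have hall : ∀ s : Fin 5, f (i + s) = g (i + s) := by
    have h5 : ∀ s : Fin 5, s = 0 ∨ s = 1 ∨ s = 2 ∨ s = 3 ∨ s = 4 := by decide
    intro s
    rcases h5 s with rfl|rfl|rfl|rfl|rfl
    · simpa using h0
    · exact h1
    · exact h2
    · exact h3
    · exact h4
  apply DFunLike.ext
  intro t
  have := hall (t - i)
  rwa [add_comm, sub_add_cancel] at this


end finv

end C5Aux

open Finset SimpleGraph

/-- If `G` is a 2-connected `n`-vertex graph with circumference at most `ℓ`,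
`k = ⌊ℓ/2⌋ ≥ 3`, `n ≥ 3k`, and `v` has degree at most `k - 1`, then the number of
5-cycles through `v` is at most `k(k-2)²n - k²(k-2)²/2`. -/
theorem C5_through_low_degree_vertex {V : Type*} [Fintype V] [DecidableEq V]
    (G : SimpleGraph V) [DecidableRel G.Adj] (n ℓ k : ℕ)
    (hn : Fintype.card V = n) (hk : k = ℓ / 2) (hk3 : 3 ≤ k) (hnk : 3 * k ≤ n)
    (h2 : TwoConnected G) (hc : CircumAtMost G ℓ)
    (v : V) (hd : G.degree v ≤ k - 1) :
    (cycleCountThrough G 5 v : ℚ) ≤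
      (k : ℚ) * ((k : ℚ) - 2) ^ 2 * n - (1 / 2) * (k : ℚ) ^ 2 * ((k : ℚ) - 2) ^ 2 := by
  classical
  have hl : ℓ ≤ 2 * k + 1 := by omega
  have hcyc : ∀ (z : V) (c : G.Walk z z), c.IsCycle → c.length ≤ 2 * k + 1 :=
    fun z c hc' => le_trans (hc c hc') hl
  set big : Finset ((_ : V) × (_ : V) × V × V) :=
    (G.neighborFinset v).sigma
      (fun a => ((G.neighborFinset v).erase a).sigma (fun b => C5Aux.XYset G v a b)) with hbig
  -- step 1 : Nat.card bound via injection
  have hstep1 : Nat.card {f : SimpleGraph.cycleGraph 5 ↪g G // ∃ i, f i = v}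
      ≤ 5 * big.card := by
    have hinj : Function.Injective
        (fun f : {f : SimpleGraph.cycleGraph 5 ↪g G // ∃ i, f i = v} =>
          (⟨Classical.choose f.2,
            ⟨⟨f.1 (Classical.choose f.2 + 1), ⟨f.1 (Classical.choose f.2 + 4),
              (f.1 (Classical.choose f.2 + 2), f.1 (Classical.choose f.2 + 3))⟩⟩,
             C5Aux.mem_big G v f.1 (Classical.choose f.2) (Classical.choose_spec f.2)⟩⟩
            : Fin 5 × {s // s ∈ big})) := by
      intro f g hfg
      have h1 : Classical.choose f.2 = Classical.choose g.2 := congrArg Prod.fst hfg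
      have h2 := congrArg (fun p => (p.2 : (_ : V) × (_ : V) × V × V)) hfg
      simp only at h2
      rw [Sigma.mk.inj_iff] at h2
      obtain ⟨e1, h2⟩ := h2
      rw [heq_iff_eq, Sigma.mk.inj_iff] at h2
      obtain ⟨e4, h2⟩ := h2
      rw [heq_iff_eq, Prod.mk.injEq] at h2
      obtain ⟨e2, e3⟩ := h2
      have hfi : f.1 (Classical.choose f.2) = v := Classical.choose_spec f.2
      have hgi : g.1 (Classical.choose g.2) = v := Classical.choose_spec g.2
      rw [← h1] at hgi e1 e2 e3 e4
      apply Subtype.ext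
      exact C5Aux.emb_ext G f.1 g.1 (Classical.choose f.2) (by rw [hfi, hgi]) e1 e2 e3 e4
    calc Nat.card {f : SimpleGraph.cycleGraph 5 ↪g G // ∃ i, f i = v}
        ≤ Nat.card (Fin 5 × {s // s ∈ big}) := Nat.card_le_card_of_injective _ hinj
      _ = 5 * big.card := by
          rw [Nat.card_eq_fintype_card, Fintype.card_prod, Fintype.card_coe, Fintype.card_fin]
  -- step 2 : big.card bound
  have hstep2 : big.card ≤ (k - 1) * ((k - 2) * (k * (n - 2))) := by
    rw [hbig, Finset.card_sigma]
    have hrow : ∀ a ∈ G.neighborFinset v,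
        (((G.neighborFinset v).erase a).sigma (fun b => C5Aux.XYset G v a b)).card
          ≤ (k - 2) * (k * (n - 2)) := by
      intro a ha
      rw [Finset.card_sigma]
      have hXY : ∀ b ∈ (G.neighborFinset v).erase a,
          (C5Aux.XYset G v a b).card ≤ k * (n - 2) := by
        intro b hb
        exact C5Aux.XYset_card_le G k n (by omega) hn hcyc v a b
          ((SimpleGraph.mem_neighborFinset G v a).mp ha)
      calc ∑ b ∈ (G.neighborFinset v).erase a, (C5Aux.XYset G v a b).card
          ≤ ((G.neighborFinset v).erase a).card * (k * (n - 2)) := by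
            refine le_trans (Finset.sum_le_card_nsmul _ _ _ hXY) ?_
            rw [smul_eq_mul]
        _ ≤ (k - 2) * (k * (n - 2)) := by
            have : ((G.neighborFinset v).erase a).card ≤ k - 2 := by
              rw [Finset.card_erase_of_mem ha, SimpleGraph.card_neighborFinset_eq_degree]
              omega
            exact Nat.mul_le_mul_right _ this
    calc ∑ a ∈ G.neighborFinset v,
          (((G.neighborFinset v).erase a).sigma (fun b => C5Aux.XYset G v a b)).card
        ≤ (G.neighborFinset v).card * ((k - 2) * (k * (n - 2))) := by
          refine le_trans (Finset.sum_le_card_nsmul _ _ _ hrow) ?_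
          rw [smul_eq_mul]
      _ ≤ (k - 1) * ((k - 2) * (k * (n - 2))) := by
          refine Nat.mul_le_mul_right _ ?_
          rw [SimpleGraph.card_neighborFinset_eq_degree]
          exact hd
  -- final arithmetic
  have hN : Nat.card {f : SimpleGraph.cycleGraph 5 ↪g G // ∃ i, f i = v}
      ≤ 5 * ((k - 1) * ((k - 2) * (k * (n - 2)))) := by
    calc _ ≤ 5 * big.card := hstep1
      _ ≤ 5 * ((k - 1) * ((k - 2) * (k * (n - 2)))) := Nat.mul_le_mul_left 5 hstep2
  rw [cycleCountThrough]
  set N := Nat.card {f : SimpleGraph.cycleGraph 5 ↪g G // ∃ i, f i = v} with hNdef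
  have hcast1 : ((N / (2 * 5) : ℕ) : ℚ) ≤ (N : ℚ) / 10 := by
    calc ((N / (2 * 5) : ℕ) : ℚ) = ((N / 10 : ℕ) : ℚ) := by norm_num
      _ ≤ (N : ℚ) / 10 := Nat.cast_div_le
  have hn9 : 9 ≤ n := by omega
  have hcast2 : (N : ℚ) ≤ 5 * (((k:ℚ) - 1) * (((k:ℚ) - 2) * ((k:ℚ) * ((n:ℚ) - 2)))) := by
    calc (N : ℚ) ≤ ((5 * ((k - 1) * ((k - 2) * (k * (n - 2)))) : ℕ) : ℚ) := by
          exact_mod_cast hN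
      _ = 5 * (((k:ℚ) - 1) * (((k:ℚ) - 2) * ((k:ℚ) * ((n:ℚ) - 2)))) := by
          push_cast [Nat.cast_sub (show 1 ≤ k by omega), Nat.cast_sub (show 2 ≤ k by omega),
            Nat.cast_sub (show 2 ≤ n by omega)]
          ring
  have hK3 : (3 : ℚ) ≤ (k : ℚ) := by exact_mod_cast hk3
  have hN3K : 3 * (k : ℚ) ≤ (n : ℚ) := by exact_mod_cast hnk
  have key : ((k:ℚ) - 1) * ((n:ℚ) - 2) ≤ 2 * ((k:ℚ) - 2) * (n:ℚ) - (k:ℚ) * ((k:ℚ) - 2) := by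
    nlinarith [mul_nonneg (sub_nonneg.mpr hK3) (by linarith : (0:ℚ) ≤ (n:ℚ) - 3 * (k:ℚ)),
      sq_nonneg ((k:ℚ) - 3)]
  have pos : (0:ℚ) ≤ (k:ℚ) * ((k:ℚ) - 2) / 2 := by nlinarith
  have final : (k:ℚ) * ((k:ℚ) - 2) / 2 * (((k:ℚ) - 1) * ((n:ℚ) - 2))
      ≤ (k:ℚ) * ((k:ℚ) - 2) / 2 * (2 * ((k:ℚ) - 2) * (n:ℚ) - (k:ℚ) * ((k:ℚ) - 2)) :=
    mul_le_mul_of_nonneg_left key pos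
  calc ((N / (2 * 5) : ℕ) : ℚ) ≤ (N : ℚ) / 10 := hcast1
    _ ≤ 5 * (((k:ℚ) - 1) * (((k:ℚ) - 2) * ((k:ℚ) * ((n:ℚ) - 2)))) / 10 := by linarith
    _ ≤ (k : ℚ) * ((k : ℚ) - 2) ^ 2 * n - (1 / 2) * (k : ℚ) ^ 2 * ((k : ℚ) - 2) ^ 2 := by
        nlinarith [final]
end

section
/- For every positive integer b and every k ≥ 2, the graph K_2 + bK_{k-1} (the join of an edge with b disjoint copies of the complete graph K_{k-1}) has circumference exactly 2k when b ≥ 2. -/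
/-- For `n = b(k-1) + 2`, the graph `K_2 + bK_{k-1}` on `Fin n`: vertices `0,1` are joined
to everything (and to each other), and the remaining vertices are partitioned into `b`
consecutive cliques of size `k-1`. -/
def K2JoinCliques (n k : ℕ) : SimpleGraph (Fin n) :=
  SimpleGraph.fromRel (fun a b =>
    a.val < 2 ∨ (2 ≤ a.val ∧ 2 ≤ b.val ∧ (a.val - 2) / (k - 1) = (b.val - 2) / (k - 1)))

namespace K2JCAux

open SimpleGraph

lemma adj_iff {n k : ℕ} {a b : Fin n} :
    (K2JoinCliques n k).Adj a b ↔ a ≠ b ∧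
      (a.val < 2 ∨ b.val < 2 ∨
        (2 ≤ a.val ∧ 2 ≤ b.val ∧ (a.val - 2) / (k - 1) = (b.val - 2) / (k - 1))) := by
  rw [K2JoinCliques, SimpleGraph.fromRel_adj]
  refine and_congr_right fun _ => ⟨?_, ?_⟩
  · rintro (⟨h | ⟨h1, h2, h3⟩⟩ | ⟨h | ⟨h1, h2, h3⟩⟩)
    · exact Or.inl h
    · exact Or.inr (Or.inr ⟨h1, h2, h3⟩)
    · exact Or.inr (Or.inl h)
    · exact Or.inr (Or.inr ⟨h2, h1, h3.symm⟩)
  · rintro (h | h | ⟨h1, h2, h3⟩)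
    · exact Or.inl (Or.inl h)
    · exact Or.inr (Or.inl h)
    · exact Or.inl (Or.inr ⟨h1, h2, h3⟩)

lemma adj_mk {n k : ℕ} (a b : ℕ) (ha : a < n) (hb : b < n)
    (h : a ≠ b ∧ (a < 2 ∨ b < 2 ∨
      (2 ≤ a ∧ 2 ≤ b ∧ (a - 2) / (k - 1) = (b - 2) / (k - 1)))) :
    (K2JoinCliques n k).Adj ⟨a, ha⟩ ⟨b, hb⟩ :=
  adj_iff.mpr ⟨fun hh => h.1 (congrArg Fin.val hh), h.2⟩

/-- A descending walk `s+j, s+j-1, ..., s` inside one clique. -/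
def segWalk (n k s : ℕ) (hs : 2 ≤ s) :
    (j : ℕ) → (hj : s + j < n) →
      (hcl : ∀ t ≤ j, (s + t - 2) / (k - 1) = (s - 2) / (k - 1)) →
      (K2JoinCliques n k).Walk ⟨s + j, hj⟩ ⟨s, by omega⟩
  | 0, hj, _ => SimpleGraph.Walk.nil
  | j + 1, hj, hcl =>
    SimpleGraph.Walk.cons
      (adj_mk (s + (j + 1)) (s + j) hj (by omega)
        ⟨by omega, Or.inr (Or.inr ⟨by omega, by omega, by
          rw [hcl (j + 1) le_rfl, hcl j (by omega)]⟩)⟩)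
      (segWalk n k s hs j (by omega) (fun t ht => hcl t (by omega)))

lemma segWalk_length (n k s : ℕ) (hs : 2 ≤ s) :
    ∀ (j : ℕ) (hj : s + j < n) (hcl : ∀ t ≤ j, (s + t - 2) / (k - 1) = (s - 2) / (k - 1)),
      (segWalk n k s hs j hj hcl).length = j
  | 0, _, _ => rfl
  | j + 1, hj, hcl => by
    rw [segWalk, SimpleGraph.Walk.length_cons, segWalk_length n k s hs j]

lemma mem_segWalk_support (n k s : ℕ) (hs : 2 ≤ s) :
    ∀ (j : ℕ) (hj : s + j < n) (hcl : ∀ t ≤ j, (s + t - 2) / (k - 1) = (s - 2) / (k - 1))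
      (x : Fin n), x ∈ (segWalk n k s hs j hj hcl).support → s ≤ x.val ∧ x.val ≤ s + j
  | 0, hj, hcl, x, hx => by
    rw [segWalk, SimpleGraph.Walk.support_nil, List.mem_singleton] at hx
    subst hx
    exact ⟨Nat.le_add_right _ _, Nat.le_refl _⟩
  | j + 1, hj, hcl, x, hx => by
    rw [segWalk, SimpleGraph.Walk.support_cons, List.mem_cons] at hx
    rcases hx with hx | hx
    · subst hx
      exact ⟨Nat.le_add_right _ _, Nat.le_refl _⟩
    · have h := mem_segWalk_support n k s hs j _ _ x hx
      omega

lemma segWalk_support_nodup (n k s : ℕ) (hs : 2 ≤ s) :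
    ∀ (j : ℕ) (hj : s + j < n) (hcl : ∀ t ≤ j, (s + t - 2) / (k - 1) = (s - 2) / (k - 1)),
      (segWalk n k s hs j hj hcl).support.Nodup
  | 0, _, _ => by
    rw [segWalk, SimpleGraph.Walk.support_nil]
    exact List.nodup_singleton _
  | j + 1, hj, hcl => by
    rw [segWalk, SimpleGraph.Walk.support_cons]
    refine List.nodup_cons.mpr ⟨fun hmem => ?_, segWalk_support_nodup n k s hs j _ _⟩
    have h := mem_segWalk_support n k s hs j _ _ _ hmem
    have h2 : s + (j + 1) ≤ s + j := h.2
    omega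

lemma cl1 (k : ℕ) (hk : 2 ≤ k) :
    ∀ t ≤ k - 2, (2 + t - 2) / (k - 1) = (2 - 2) / (k - 1) := by
  intro t ht
  have h1 : 2 + t - 2 = t := by omega
  have h2 : 2 - 2 = 0 := by omega
  rw [h1, h2, Nat.div_eq_of_lt (by omega), Nat.zero_div]

lemma cl2 (k : ℕ) (hk : 2 ≤ k) :
    ∀ t ≤ k - 2, (k + 1 + t - 2) / (k - 1) = (k + 1 - 2) / (k - 1) := by
  intro t ht
  have h1 : k + 1 + t - 2 = t + (k - 1) * 1 := by omega
  have h2 : k + 1 - 2 = 0 + (k - 1) * 1 := by omega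
  rw [h1, h2, Nat.add_mul_div_left _ _ (show 0 < k - 1 by omega),
    Nat.add_mul_div_left _ _ (show 0 < k - 1 by omega),
    Nat.div_eq_of_lt (by omega), Nat.zero_div]

def W1 (n k : ℕ) (hk : 2 ≤ k) (h2k : 2 * k ≤ n) :
    (K2JoinCliques n k).Walk ⟨k, by omega⟩ ⟨2, by omega⟩ :=
  (segWalk n k 2 (le_refl 2) (k - 2) (by omega) (cl1 k hk)).copy
    (by simp only [Fin.mk.injEq]; omega) rfl

def W2 (n k : ℕ) (hk : 2 ≤ k) (h2k : 2 * k ≤ n) :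
    (K2JoinCliques n k).Walk ⟨2 * k - 1, by omega⟩ ⟨k + 1, by omega⟩ :=
  (segWalk n k (k + 1) (by omega) (k - 2) (by omega) (cl2 k hk)).copy
    (by simp only [Fin.mk.injEq]; omega) rfl

def pathP (n k : ℕ) (hk : 2 ≤ k) (h2k : 2 * k ≤ n) :
    (K2JoinCliques n k).Walk ⟨k, by omega⟩ ⟨0, by omega⟩ :=
  (W1 n k hk h2k).append
    (SimpleGraph.Walk.cons (adj_mk 2 1 (by omega) (by omega) ⟨by omega, Or.inr (Or.inl (by omega))⟩)
      (SimpleGraph.Walk.cons (adj_mk 1 (2 * k - 1) (by omega) (by omega) ⟨by omega, Or.inl (by omega)⟩)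
        ((W2 n k hk h2k).append
          (SimpleGraph.Walk.cons
            (adj_mk (k + 1) 0 (by omega) (by omega) ⟨by omega, Or.inr (Or.inl (by omega))⟩)
            SimpleGraph.Walk.nil))))

lemma mem_W1 (n k : ℕ) (hk : 2 ≤ k) (h2k : 2 * k ≤ n) :
    ∀ x ∈ (W1 n k hk h2k).support, 2 ≤ x.val ∧ x.val ≤ k := by
  intro x hx
  rw [W1, SimpleGraph.Walk.support_copy] at hx
  have h := mem_segWalk_support n k 2 _ _ _ _ x hx
  omega

lemma mem_W2 (n k : ℕ) (hk : 2 ≤ k) (h2k : 2 * k ≤ n) :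
    ∀ x ∈ (W2 n k hk h2k).support, k + 1 ≤ x.val ∧ x.val ≤ 2 * k - 1 := by
  intro x hx
  rw [W2, SimpleGraph.Walk.support_copy] at hx
  have h := mem_segWalk_support n k (k + 1) _ _ _ _ x hx
  omega

lemma pathP_support (n k : ℕ) (hk : 2 ≤ k) (h2k : 2 * k ≤ n) :
    (pathP n k hk h2k).support =
      (W1 n k hk h2k).support ++
        ((⟨1, by omega⟩ : Fin n) :: ((W2 n k hk h2k).support ++ [(⟨0, by omega⟩ : Fin n)])) := by
  simp only [pathP, SimpleGraph.Walk.support_append, SimpleGraph.Walk.support_cons,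
    SimpleGraph.Walk.support_nil, List.tail_cons]

lemma pathP_isPath (n k : ℕ) (hk : 2 ≤ k) (h2k : 2 * k ≤ n) :
    (pathP n k hk h2k).IsPath := by
  apply SimpleGraph.Walk.IsPath.mk'
  rw [pathP_support]
  rw [List.nodup_append]
  refine ⟨?_, ?_, ?_⟩
  · rw [W1, SimpleGraph.Walk.support_copy]
    exact segWalk_support_nodup n k 2 _ _ _ _
  · rw [List.nodup_cons]
    constructor
    · intro hmem
      rcases List.mem_append.mp hmem with h | h
      · have h1 := mem_W2 n k hk h2k _ h
        have h2 : k + 1 ≤ 1 := h1.1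
        omega
      · rw [List.mem_singleton] at h
        have h2 : (1 : ℕ) = 0 := congrArg Fin.val h
        omega
    · rw [List.nodup_append]
      refine ⟨?_, List.nodup_singleton _, ?_⟩
      · rw [W2, SimpleGraph.Walk.support_copy]
        exact segWalk_support_nodup n k (k + 1) _ _ _ _
      · intro x hx y hy hx'
        rw [List.mem_singleton] at hy
        subst hy
        have h1 := mem_W2 n k hk h2k _ hx
        have h2 : x.val = 0 := by rw [hx']
        omega
  · intro x hx y hx' hxy
    subst hxy
    have h1 := mem_W1 n k hk h2k _ hx
    rcases List.mem_cons.mp hx' with h | h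
    · have h2 : x.val = 1 := by rw [h]
      omega
    · rcases List.mem_append.mp h with h | h
      · have h2 := mem_W2 n k hk h2k _ h
        omega
      · rw [List.mem_singleton] at h
        have h2 : x.val = 0 := by rw [h]
        omega

lemma pathP_edge (n k : ℕ) (hk : 2 ≤ k) (h2k : 2 * k ≤ n) :
    s((⟨0, by omega⟩ : Fin n), (⟨k, by omega⟩ : Fin n)) ∉ (pathP n k hk h2k).edges := by
  intro hmem
  rw [pathP] at hmem
  simp only [SimpleGraph.Walk.edges_append, SimpleGraph.Walk.edges_cons,
    SimpleGraph.Walk.edges_nil, List.mem_append, List.mem_cons, List.not_mem_nil,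
    or_false] at hmem
  rcases hmem with h | h | h | h | h
  · rw [W1, SimpleGraph.Walk.edges_copy] at h
    have h1 := mem_segWalk_support n k 2 (le_refl 2) (k - 2) (by omega) (cl1 k hk) _
      (SimpleGraph.Walk.fst_mem_support_of_mem_edges _ h)
    have h2 : 2 ≤ (0 : ℕ) := h1.1
    omega
  · rw [Sym2.eq_iff] at h
    rcases h with ⟨h1, h2⟩ | ⟨h1, h2⟩ <;>
      simp only [Fin.mk.injEq] at h1 h2 <;> omega
  · rw [Sym2.eq_iff] at h
    rcases h with ⟨h1, h2⟩ | ⟨h1, h2⟩ <;>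
      simp only [Fin.mk.injEq] at h1 h2 <;> omega
  · rw [W2, SimpleGraph.Walk.edges_copy] at h
    have h1 := mem_segWalk_support n k (k + 1) (by omega) (k - 2) (by omega) (cl2 k hk) _
      (SimpleGraph.Walk.fst_mem_support_of_mem_edges _ h)
    have h2 : k + 1 ≤ (0 : ℕ) := h1.1
    omega
  · rw [Sym2.eq_iff] at h
    rcases h with ⟨h1, h2⟩ | ⟨h1, h2⟩ <;>
      simp only [Fin.mk.injEq] at h1 h2 <;> omega

def theCycle (n k : ℕ) (hk : 2 ≤ k) (h2k : 2 * k ≤ n) :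
    (K2JoinCliques n k).Walk ⟨0, by omega⟩ ⟨0, by omega⟩ :=
  SimpleGraph.Walk.cons (adj_mk 0 k (by omega) (by omega) ⟨by omega, Or.inl (by omega)⟩)
    (pathP n k hk h2k)

lemma theCycle_isCycle (n k : ℕ) (hk : 2 ≤ k) (h2k : 2 * k ≤ n) :
    (theCycle n k hk h2k).IsCycle := by
  rw [theCycle]
  exact (SimpleGraph.Walk.cons_isCycle_iff _ _).mpr
    ⟨pathP_isPath n k hk h2k, pathP_edge n k hk h2k⟩

lemma theCycle_length (n k : ℕ) (hk : 2 ≤ k) (h2k : 2 * k ≤ n) :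
    (theCycle n k hk h2k).length = 2 * k := by
  simp only [theCycle, pathP, W1, W2, SimpleGraph.Walk.length_cons,
    SimpleGraph.Walk.length_append, SimpleGraph.Walk.length_copy,
    SimpleGraph.Walk.length_nil, segWalk_length]
  omega

lemma upper_bound (n k : ℕ) (hk : 2 ≤ k) (v : Fin n) (c : (K2JoinCliques n k).Walk v v)
    (hc : c.IsCycle) : c.length ≤ 2 * k := by
  classical
  have hnpos : 0 < n := v.pos
  have hnd : c.support.tail.Nodup := hc.support_nodup
  set S := c.support.tail.toFinset with hS
  have hScard : S.card = c.length := by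
    rw [hS, List.toFinset_card_of_nodup hnd, List.length_tail,
      SimpleGraph.Walk.length_support]
    omega
  have hdartsnd : (c.darts.map (fun d => d.snd)).Nodup := by
    rw [SimpleGraph.Walk.map_snd_darts]; exact hnd
  set T := (S.filter (fun x => 2 ≤ x.val)).image
    (fun x : Fin n => (x.val - 2) / (k - 1)) with hT
  -- existence of an exit dart for each clique visited (when at least two are visited)
  have hexit : ∀ i ∈ T, (∃ j ∈ T, j ≠ i) →
      ∃ d ∈ c.darts, 2 ≤ d.fst.val ∧ (d.fst.val - 2) / (k - 1) = i ∧ d.snd.val < 2 := by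
    intro i hi hne
    obtain ⟨j, hj, hji⟩ := hne
    rw [hT] at hi hj
    obtain ⟨u, hu, hui⟩ := Finset.mem_image.mp hi
    obtain ⟨w, hw, hwj⟩ := Finset.mem_image.mp hj
    rw [Finset.mem_filter, hS] at hu hw
    have hul : u ∈ c.support.tail := List.mem_toFinset.mp hu.1
    have hwl : w ∈ c.support.tail := List.mem_toFinset.mp hw.1
    have hus : u ∈ c.support := by
      rw [c.support_eq_cons]; exact List.mem_cons_of_mem _ hul
    have hws : w ∈ (c.rotate u hus).support := by
      rw [(c.rotate u hus).support_eq_cons]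
      exact List.mem_cons_of_mem _
        (((SimpleGraph.Walk.support_rotate c u hus).mem_iff).mpr hwl)
    have huA : u ∈ {x : Fin n | 2 ≤ x.val ∧ (x.val - 2) / (k - 1) = i} := ⟨hu.2, hui⟩
    have hwA : w ∉ {x : Fin n | 2 ≤ x.val ∧ (x.val - 2) / (k - 1) = i} := by
      intro hmem
      exact hji (hwj.symm.trans hmem.2)
    obtain ⟨d, hd, hdf, hds⟩ := ((c.rotate u hus).takeUntil w hws).exists_boundary_dart
      {x : Fin n | 2 ≤ x.val ∧ (x.val - 2) / (k - 1) = i} huA hwA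
    have hdc : d ∈ c.darts :=
      (SimpleGraph.Walk.rotate_darts c u hus).mem_iff.mp
        ((c.rotate u hus).darts_takeUntil_subset hws hd)
    refine ⟨d, hdc, hdf.1, hdf.2, ?_⟩
    have hadj := d.adj
    rw [adj_iff] at hadj
    by_contra hge
    push_neg at hge
    have hdf1 : 2 ≤ d.fst.val := hdf.1
    rcases hadj.2 with h | h | ⟨h1, h2, h3⟩
    · omega
    · omega
    · exact hds ⟨h2, h3 ▸ hdf.2⟩
  -- at most two cliques are visited
  have hsmall : (Finset.univ.filter (fun x : Fin n => x.val < 2)).card ≤ 2 := by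
    have h := Finset.card_le_card_of_injOn (fun x : Fin n => x.val)
      (s := Finset.univ.filter (fun x : Fin n => x.val < 2)) (t := Finset.range 2)
      (by intro a ha; simp only [Finset.mem_coe, Finset.mem_filter] at ha; simp only [Finset.mem_coe, Finset.mem_range]
          exact ha.2)
      (by intro a _ b _ h; exact Fin.ext h)
    simpa using h
  have hT2 : T.card ≤ 2 := by
    rcases le_or_gt T.card 1 with h1 | h1
    · omega
    · have hother : ∀ i ∈ T, ∃ j ∈ T, j ≠ i := fun i _ =>
        (Finset.one_lt_card_iff_nontrivial.mp h1).exists_ne i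
      have hcard : T.card ≤ (Finset.univ.filter (fun x : Fin n => x.val < 2)).card := by
        apply Finset.card_le_card_of_injOn (fun i =>
          if h : ∃ d ∈ c.darts, 2 ≤ d.fst.val ∧ (d.fst.val - 2) / (k - 1) = i ∧ d.snd.val < 2
          then h.choose.snd else ⟨0, hnpos⟩)
        · intro i hi
          have hex := hexit i hi (hother i hi)
          simp only [dif_pos hex]
          obtain ⟨_, _, _, h3⟩ := hex.choose_spec
          simp only [Finset.mem_coe, Finset.mem_filter, Finset.mem_univ, true_and]
          exact h3
        · intro i hi j hj hij
          simp only [Finset.mem_coe] at hi hj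
          have hexi := hexit i hi (hother i hi)
          have hexj := hexit j hj (hother j hj)
          simp only [dif_pos hexi, dif_pos hexj] at hij
          obtain ⟨hdi, h1i, h2i, h3i⟩ := hexi.choose_spec
          obtain ⟨hdj, h1j, h2j, h3j⟩ := hexj.choose_spec
          have heq : hexi.choose = hexj.choose :=
            List.inj_on_of_nodup_map hdartsnd hdi hdj hij
          rw [← h2i, ← h2j, heq]
      omega
  -- each clique contains at most k-1 vertices
  have hclique : ∀ i : ℕ,
      (Finset.univ.filter (fun x : Fin n => 2 ≤ x.val ∧ (x.val - 2) / (k - 1) = i)).card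
        ≤ k - 1 := by
    intro i
    have h := Finset.card_le_card_of_injOn (fun x : Fin n => x.val)
      (s := Finset.univ.filter (fun x : Fin n => 2 ≤ x.val ∧ (x.val - 2) / (k - 1) = i))
      (t := Finset.Ico (2 + (k - 1) * i) (2 + (k - 1) * i + (k - 1)))
      (by
        intro a ha
        simp only [Finset.mem_coe, Finset.mem_filter, Finset.mem_univ, true_and] at ha
        obtain ⟨h2, hcla⟩ := ha
        have hdm := Nat.div_add_mod (a.val - 2) (k - 1)
        have hmod : (a.val - 2) % (k - 1) < k - 1 := Nat.mod_lt _ (by omega)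
        rw [hcla] at hdm
        change a.val ∈ _
        rw [Finset.mem_coe, Finset.mem_Ico]
        generalize hgen : (k - 1) * i = p at hdm ⊢
        omega)
      (by intro a _ b _ h; exact Fin.ext h)
    have hIco : (Finset.Ico (2 + (k - 1) * i) (2 + (k - 1) * i + (k - 1))).card = k - 1 := by
      rw [Nat.card_Ico]
      generalize hgen : (k - 1) * i = p
      omega
    omega
  -- covering
  have hcover : S ⊆ (Finset.univ.filter (fun x : Fin n => x.val < 2)) ∪
      T.biUnion (fun i =>
        Finset.univ.filter (fun x : Fin n => 2 ≤ x.val ∧ (x.val - 2) / (k - 1) = i)) := by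
    intro x hx
    rw [Finset.mem_union]
    by_cases h2 : x.val < 2
    · exact Or.inl (Finset.mem_filter.mpr ⟨Finset.mem_univ x, h2⟩)
    · push_neg at h2
      refine Or.inr (Finset.mem_biUnion.mpr ⟨(x.val - 2) / (k - 1), ?_, ?_⟩)
      · rw [hT]
        exact Finset.mem_image.mpr ⟨x, Finset.mem_filter.mpr ⟨hx, h2⟩, rfl⟩
      · exact Finset.mem_filter.mpr ⟨Finset.mem_univ x, h2, rfl⟩
  have hbi : (T.biUnion (fun i =>
      Finset.univ.filter (fun x : Fin n => 2 ≤ x.val ∧ (x.val - 2) / (k - 1) = i))).card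
        ≤ T.card * (k - 1) :=
    Finset.card_biUnion_le_card_mul _ _ _ (fun i _ => hclique i)
  have hunion := Finset.card_union_le
    (Finset.univ.filter (fun x : Fin n => x.val < 2))
    (T.biUnion (fun i =>
      Finset.univ.filter (fun x : Fin n => 2 ≤ x.val ∧ (x.val - 2) / (k - 1) = i)))
  have hsub := Finset.card_le_card hcover
  have hmul : T.card * (k - 1) ≤ 2 * (k - 1) := Nat.mul_le_mul_right _ hT2
  omega

end K2JCAux

/-- For `b ≥ 2` and `k ≥ 2`, the graph `K_2 + bK_{k-1}` has circumference exactly `2k`. -/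
theorem circumference_K2JoinCliques (b k : ℕ) (hb : 2 ≤ b) (hk : 2 ≤ k) :
    (∃ (v : Fin (b * (k - 1) + 2)) (c : (K2JoinCliques (b * (k - 1) + 2) k).Walk v v),
        c.IsCycle ∧ c.length = 2 * k) ∧
      ∀ (v : Fin (b * (k - 1) + 2)) (c : (K2JoinCliques (b * (k - 1) + 2) k).Walk v v),
        c.IsCycle → c.length ≤ 2 * k := by
  have hmul : 2 * (k - 1) ≤ b * (k - 1) := Nat.mul_le_mul_right _ hb
  have h2k : 2 * k ≤ b * (k - 1) + 2 := by omega
  exact ⟨⟨⟨0, by omega⟩, K2JCAux.theCycle _ k hk h2k,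
      K2JCAux.theCycle_isCycle _ k hk h2k, K2JCAux.theCycle_length _ k hk h2k⟩,
    fun v c hc => K2JCAux.upper_bound _ k hk v c hc⟩
end
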